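/- Let G = β̂ + π̂ where β̂: ℝ → ℝ is nonnegative, convex, C¹ with β̂(0)=0 and β:=β̂' maximal monotone with β(0)=0, and π̂ ∈ C¹(ℝ) with π := π̂' Lipschitz continuous and π(0)=π̂(0)=0. Assume G(r) + (‖π'‖_{L^∞}/2) r² ≥ 0 for all r. Define G_ε = β̂_ε + π̂ with β̂_ε the Moreau–Yosida regularization of β̂. Then for all r ∈ ℝ and all ε > 0: G_ε(r) ≥ -(‖π'‖_{L^∞}/2) r² - 2‖π'‖_{L^∞} ε r². -/

import Mathlib

/-- If `pihat` is `C¹` with Lipschitz derivative vanishing at `0`, then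
`pihat x + (L/2) x² ≥ 0` (given `pihat 0 = 0`). -/
lemma pihat_lower_bound (pihat : ℝ → ℝ) (L : NNReal)
    (hpiC1 : ContDiff ℝ 1 pihat) (hpiLip : LipschitzWith L (deriv pihat))
    (hpi0 : deriv pihat 0 = 0) (hpihat0 : pihat 0 = 0) (x : ℝ) :
    0 ≤ pihat x + (L : ℝ) / 2 * x ^ 2 := by
  have hderiv : ∀ t : ℝ, |deriv pihat t| ≤ (L : ℝ) * |t| := by
    intro t
    have := hpiLip.dist_le_mul t 0
    simpa [hpi0, Real.dist_eq] using this
  have hcont : Continuous (deriv pihat) := hpiC1.continuous_deriv le_rfl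
  have hdiff : ∀ t : ℝ, HasDerivAt pihat (deriv pihat t) t := fun t =>
    ((hpiC1.differentiable one_ne_zero) t).hasDerivAt
  have hftc : ∫ t in (0:ℝ)..x, deriv pihat t = pihat x - pihat 0 :=
    intervalIntegral.integral_deriv_eq_sub (fun t _ => (hpiC1.differentiable one_ne_zero) t)
      (hcont.intervalIntegrable 0 x)
  have hpix : pihat x = ∫ t in (0:ℝ)..x, deriv pihat t := by
    rw [hftc, hpihat0, sub_zero]
  have hint_id : ∫ t in (0:ℝ)..x, (L : ℝ) * t = (L : ℝ) / 2 * x ^ 2 := by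
    rw [intervalIntegral.integral_const_mul, integral_id]
    ring
  have hsum : pihat x + (L : ℝ) / 2 * x ^ 2
      = ∫ t in (0:ℝ)..x, (deriv pihat t + (L : ℝ) * t) := by
    rw [intervalIntegral.integral_add (hcont.intervalIntegrable 0 x)
      ((show Continuous fun t : ℝ => (L : ℝ) * t from continuous_const.mul continuous_id').intervalIntegrable 0 x), hint_id, hpix]
  rw [hsum]
  rcases le_total 0 x with hx | hx
  · apply intervalIntegral.integral_nonneg hx
    intro u hu
    have h1 := hderiv u
    have hu0 : 0 ≤ u := hu.1
    rw [abs_of_nonneg hu0] at h1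
    have := abs_le.mp h1
    linarith [this.1]
  · rw [intervalIntegral.integral_symm x 0]
    have : (0:ℝ) ≤ ∫ t in x..(0:ℝ), -(deriv pihat t + (L : ℝ) * t) := by
      apply intervalIntegral.integral_nonneg hx
      intro u hu
      have h1 := hderiv u
      have hu0 : u ≤ 0 := hu.2
      rw [abs_of_nonpos hu0] at h1
      have := abs_le.mp h1
      linarith [this.2]
    rw [intervalIntegral.integral_neg] at this
    linarith

/-- Lower bound for the regularized potential `G_ε = β̂_ε + π̂`:
`G_ε(r) ≥ -(L/2) r² - 2 L ε r²` where `L = ‖π'‖_∞` is the Lipschitz constant of `π = π̂'`. -/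
theorem stmt_2 (bhat pihat : ℝ → ℝ) (L : NNReal)
    (hbC1 : ContDiff ℝ 1 bhat) (hbconv : ConvexOn ℝ Set.univ bhat)
    (hbnonneg : ∀ r, 0 ≤ bhat r) (hb0 : bhat 0 = 0)
    (hbmono : Monotone (deriv bhat)) (hbd0 : deriv bhat 0 = 0)
    (hpiC1 : ContDiff ℝ 1 pihat) (hpiLip : LipschitzWith L (deriv pihat))
    (hpi0 : deriv pihat 0 = 0) (hpihat0 : pihat 0 = 0)
    (hG : ∀ r : ℝ, 0 ≤ bhat r + pihat r + (L : ℝ) / 2 * r ^ 2)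
    (ε : ℝ) (hε : 0 < ε) (r : ℝ) :
    (⨅ s : ℝ, 1 / (2 * ε) * |r - s| ^ 2 + bhat s) + pihat r ≥
      -((L : ℝ) / 2) * r ^ 2 - 2 * (L : ℝ) * ε * r ^ 2 := by
  have hpi := pihat_lower_bound pihat L hpiC1 hpiLip hpi0 hpihat0 r
  have hL : (0:ℝ) ≤ (L : ℝ) := L.coe_nonneg
  have hinf : (-((L : ℝ) / 2) * r ^ 2 - 2 * (L : ℝ) * ε * r ^ 2) - pihat r ≤
      ⨅ s : ℝ, 1 / (2 * ε) * |r - s| ^ 2 + bhat s := by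
    apply le_ciInf
    intro s
    have h1 : (0:ℝ) ≤ 1 / (2 * ε) * |r - s| ^ 2 := by positivity
    have h2 := hbnonneg s
    nlinarith [sq_nonneg r, mul_nonneg (mul_nonneg hL hε.le) (sq_nonneg r)]
  linarith
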